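/- Let T be a random variable and Δ a random vector such that E[ζ | T] = 0 where ζ = ζ(T, Δ) is bounded. Then for any θ > 0, any measurable set A ⊂ ℝ, and i.i.d. copies (Tᵢ, Δᵢ), i = 1,…,n: E[ exp( θ Σ_{i=1}^n 1_A(Tᵢ) ζ(Tᵢ, Δᵢ) ) ] ≤ exp( n Σ_{ℓ=2}^∞ (θ^ℓ/ℓ!) E[ 1_A(T) |E(ζ^ℓ | T)| ] ), using log(1+x) ≤ x and the exponential series with vanishing first-order term. -/

import Mathlib

open MeasureTheory

theorem aux_18 {Ω : Type*} (m : MeasurableSpace Ω) [mΩ : MeasurableSpace Ω]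
    (μ : Measure Ω) [IsProbabilityMeasure μ] (hm : m ≤ mΩ)
    (z : Ω → ℝ) (hz_meas : Measurable z) (Cζ : ℝ) (hzabs : ∀ ω, |z ω| ≤ Cζ)
    (hcond : μ[z | m] =ᵐ[μ] fun _ => (0:ℝ))
    (θ : ℝ) (hθ : 0 < θ) (s : Set Ω) (hs : MeasurableSet[m] s) (hs0 : MeasurableSet s) :
    ∫ ω, Real.exp (θ * (s.indicator (fun _ => (1:ℝ)) ω * z ω)) ∂μ
      ≤ Real.exp (∑' ℓ : ℕ,
          θ ^ (ℓ + 2) / (Nat.factorial (ℓ + 2)) *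
            ∫ ω, s.indicator (fun _ => (1:ℝ)) ω *
              |(μ[fun ω' => z ω' ^ (ℓ + 2) | m]) ω| ∂μ) := by
  set g : Ω → ℝ := fun ω => s.indicator (fun _ => (1:ℝ)) ω with hg_def
  have hg_meas : Measurable g := measurable_const.indicator hs0
  set f : Ω → ℝ := fun ω => g ω * z ω with hf_def
  have hf_meas : Measurable f := hg_meas.mul hz_meas
  have hΩ : Nonempty Ω := by
    by_contra h
    rw [not_nonempty_iff] at h
    have h1 := measure_univ (μ := μ)
    rw [Set.univ_eq_empty_iff.mpr h, measure_empty] at h1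
    exact zero_ne_one h1
  have hC : 0 ≤ Cζ := (abs_nonneg _).trans (hzabs hΩ.some)
  have hg01 : ∀ ω, g ω = 0 ∨ g ω = 1 := by
    intro ω
    by_cases h : ω ∈ s <;> simp [hg_def, Set.indicator_apply, h]
  have hg0 : ∀ ω, 0 ≤ g ω := fun ω => by rcases hg01 ω with h | h <;> simp [h]
  have hg1 : ∀ ω, g ω ≤ 1 := fun ω => by rcases hg01 ω with h | h <;> simp [h]
  have hfabs : ∀ ω, |f ω| ≤ Cζ := by
    intro ω
    rcases hg01 ω with h | h <;> simp [hf_def, h, hzabs ω, hC]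
  have hind : ∀ (u : Ω → ℝ) ω, g ω * u ω = s.indicator u ω := by
    intro u ω
    by_cases h : ω ∈ s <;> simp [hg_def, Set.indicator_apply, h]
  -- integrability facts
  have hint_of_bdd : ∀ (u : Ω → ℝ), Measurable u → ∀ (c : ℝ), (∀ ω, |u ω| ≤ c) →
      Integrable u μ := by
    intro u hu c hc
    exact (integrable_const c).mono' hu.aestronglyMeasurable
      (Filter.Eventually.of_forall fun ω => (Real.norm_eq_abs _).symm ▸ hc ω)
  have hz_int : Integrable z μ := hint_of_bdd z hz_meas Cζ hzabs
  have hzpow_int : ∀ ℓ : ℕ, Integrable (fun ω => z ω ^ ℓ) μ := by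
    intro ℓ
    refine hint_of_bdd _ (hz_meas.pow_const ℓ) (Cζ ^ ℓ) fun ω => ?_
    rw [abs_pow]
    exact pow_le_pow_left₀ (abs_nonneg _) (hzabs ω) ℓ
  have hfpow_int : ∀ ℓ : ℕ, Integrable (fun ω => f ω ^ ℓ) μ := by
    intro ℓ
    refine hint_of_bdd _ (hf_meas.pow_const ℓ) (Cζ ^ ℓ) fun ω => ?_
    rw [abs_pow]
    exact pow_le_pow_left₀ (abs_nonneg _) (hfabs ω) ℓ
  -- (1) mean zero
  have hmean : ∫ ω, f ω ∂μ = 0 := by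
    have h1 : ∫ ω, f ω ∂μ = ∫ ω in s, z ω ∂μ := by
      rw [← integral_indicator hs0]
      exact integral_congr_ae (Filter.Eventually.of_forall fun ω => hind z ω)
    rw [h1, ← setIntegral_condExp hm hz_int hs]
    calc ∫ ω in s, (μ[z|m]) ω ∂μ = ∫ (_ : Ω) in s, (0:ℝ) ∂μ :=
          integral_congr_ae (ae_restrict_of_ae hcond)
      _ = 0 := by simp
  -- power identity
  have hfpow : ∀ (ℓ : ℕ) ω, f ω ^ (ℓ + 2) = g ω * z ω ^ (ℓ + 2) := by
    intro ℓ ω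
    rcases hg01 ω with h | h <;> simp [hf_def, mul_pow, h]
  -- (2) the key inequality for each ℓ
  have hkey : ∀ ℓ : ℕ, ∫ ω, f ω ^ (ℓ + 2) ∂μ ≤
      ∫ ω, g ω * |(μ[fun ω' => z ω' ^ (ℓ + 2)|m]) ω| ∂μ := by
    intro ℓ
    have h1 : ∫ ω, f ω ^ (ℓ + 2) ∂μ = ∫ ω in s, z ω ^ (ℓ + 2) ∂μ := by
      rw [← integral_indicator hs0]
      refine integral_congr_ae (Filter.Eventually.of_forall fun ω => ?_)
      show f ω ^ (ℓ + 2) = s.indicator (fun ω => z ω ^ (ℓ + 2)) ω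
      rw [hfpow ℓ ω, hind (fun ω => z ω ^ (ℓ + 2)) ω]
    rw [h1, ← setIntegral_condExp hm (hzpow_int (ℓ + 2)) hs]
    calc ∫ ω in s, (μ[fun ω' => z ω' ^ (ℓ + 2)|m]) ω ∂μ
        ≤ ∫ ω in s, |(μ[fun ω' => z ω' ^ (ℓ + 2)|m]) ω| ∂μ := by
          exact integral_mono integrable_condExp.integrableOn
            integrable_condExp.abs.integrableOn fun ω => le_abs_self _
      _ = ∫ ω, g ω * |(μ[fun ω' => z ω' ^ (ℓ + 2)|m]) ω| ∂μ := by
          rw [← integral_indicator hs0]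
          exact integral_congr_ae (Filter.Eventually.of_forall fun ω =>
            (hind (fun ω => |(μ[fun ω' => z ω' ^ (ℓ + 2)|m]) ω|) ω).symm)
  -- bound on RHS terms
  have hrhs_bdd : ∀ ℓ : ℕ, ∫ ω, g ω * |(μ[fun ω' => z ω' ^ (ℓ + 2)|m]) ω| ∂μ ≤ Cζ ^ (ℓ + 2) := by
    intro ℓ
    have h1 : ∫ ω, g ω * |(μ[fun ω' => z ω' ^ (ℓ + 2)|m]) ω| ∂μ
        ≤ ∫ ω, |(μ[fun ω' => z ω' ^ (ℓ + 2)|m]) ω| ∂μ := by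
      refine integral_mono ?_ integrable_condExp.abs fun ω => ?_
      · exact integrable_condExp.abs.bdd_mul (c := 1) hg_meas.aestronglyMeasurable
          (Filter.Eventually.of_forall fun ω => by rw [Real.norm_eq_abs, abs_of_nonneg (hg0 ω)]; exact hg1 ω)
      · calc g ω * |(μ[fun ω' => z ω' ^ (ℓ + 2)|m]) ω|
            ≤ 1 * |(μ[fun ω' => z ω' ^ (ℓ + 2)|m]) ω| :=
              mul_le_mul_of_nonneg_right (hg1 ω) (abs_nonneg _)
          _ = _ := one_mul _
    refine h1.trans ((integral_abs_condExp_le _).trans ?_)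
    calc ∫ ω, |z ω ^ (ℓ + 2)| ∂μ ≤ ∫ _ : Ω, Cζ ^ (ℓ + 2) ∂μ := by
          refine integral_mono (hzpow_int (ℓ+2)).abs (integrable_const _) fun ω => ?_
          rw [abs_pow]
          exact pow_le_pow_left₀ (abs_nonneg _) (hzabs ω) _
      _ = Cζ ^ (ℓ + 2) := by simp
  have hrhs_nonneg : ∀ ℓ : ℕ, 0 ≤ ∫ ω, g ω * |(μ[fun ω' => z ω' ^ (ℓ + 2)|m]) ω| ∂μ :=
    fun ℓ => integral_nonneg fun ω => mul_nonneg (hg0 ω) (abs_nonneg _)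
  -- series expansion of the integral
  have hFbd : ∀ (ℓ : ℕ) ω, |(θ * f ω) ^ ℓ / (Nat.factorial ℓ : ℝ)|
      ≤ (θ * Cζ) ^ ℓ / (Nat.factorial ℓ : ℝ) := by
    intro ℓ ω
    rw [abs_div, abs_pow, Nat.abs_cast]
    have h1 : |θ * f ω| ≤ θ * Cζ := by
      rw [abs_mul, abs_of_pos hθ]
      exact mul_le_mul_of_nonneg_left (hfabs ω) hθ.le
    exact div_le_div_of_nonneg_right (pow_le_pow_left₀ (abs_nonneg _) h1 ℓ) (by positivity)
  have hF_int : ∀ ℓ : ℕ, Integrable (fun ω => (θ * f ω) ^ ℓ / (Nat.factorial ℓ : ℝ)) μ := by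
    intro ℓ
    exact hint_of_bdd _ (((measurable_const.mul hf_meas).pow_const ℓ).div_const _)
      _ (hFbd ℓ)
  have hF_sum : Summable fun ℓ : ℕ => ∫ ω, ‖(θ * f ω) ^ ℓ / (Nat.factorial ℓ : ℝ)‖ ∂μ := by
    refine Summable.of_nonneg_of_le
      (fun ℓ => integral_nonneg fun ω => norm_nonneg _)
      (fun ℓ => ?_) (Real.summable_pow_div_factorial (θ * Cζ))
    calc ∫ ω, ‖(θ * f ω) ^ ℓ / (Nat.factorial ℓ : ℝ)‖ ∂μ
        ≤ ∫ _ : Ω, (θ * Cζ) ^ ℓ / (Nat.factorial ℓ : ℝ) ∂μ := by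
          refine integral_mono (hF_int ℓ).norm (integrable_const _) fun ω => ?_
          rw [Real.norm_eq_abs]
          exact hFbd ℓ ω
      _ = (θ * Cζ) ^ ℓ / (Nat.factorial ℓ : ℝ) := by simp
  set c : ℕ → ℝ := fun ℓ => θ ^ ℓ / (Nat.factorial ℓ : ℝ) * ∫ ω, f ω ^ ℓ ∂μ with hc_def
  have hexp : ∫ ω, Real.exp (θ * f ω) ∂μ = ∑' ℓ, c ℓ := by
    have h1 : ∀ ω, Real.exp (θ * f ω) = ∑' ℓ : ℕ, (θ * f ω) ^ ℓ / (Nat.factorial ℓ : ℝ) := by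
      intro ω
      rw [Real.exp_eq_exp_ℝ, NormedSpace.exp_eq_tsum_div]
    calc ∫ ω, Real.exp (θ * f ω) ∂μ
        = ∫ ω, ∑' ℓ : ℕ, (θ * f ω) ^ ℓ / (Nat.factorial ℓ : ℝ) ∂μ :=
          integral_congr_ae (Filter.Eventually.of_forall h1)
      _ = ∑' ℓ : ℕ, ∫ ω, (θ * f ω) ^ ℓ / (Nat.factorial ℓ : ℝ) ∂μ :=
          (integral_tsum_of_summable_integral_norm hF_int hF_sum).symm
      _ = ∑' ℓ, c ℓ := by
          refine tsum_congr fun ℓ => ?_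
          have h2 : ∀ ω, (θ * f ω) ^ ℓ / (Nat.factorial ℓ : ℝ)
              = θ ^ ℓ / (Nat.factorial ℓ : ℝ) * f ω ^ ℓ := fun ω => by rw [mul_pow]; ring
          simp_rw [h2]
          rw [integral_const_mul]
  -- summability of c
  have hfint_bd : ∀ ℓ : ℕ, |∫ ω, f ω ^ ℓ ∂μ| ≤ Cζ ^ ℓ := by
    intro ℓ
    have h0 := norm_integral_le_integral_norm (μ := μ) (fun ω => f ω ^ ℓ)
    simp only [Real.norm_eq_abs] at h0
    refine h0.trans ?_
    calc ∫ ω, |f ω ^ ℓ| ∂μ ≤ ∫ _ : Ω, Cζ ^ ℓ ∂μ := by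
          refine integral_mono (hfpow_int ℓ).abs (integrable_const _) fun ω => ?_
          rw [abs_pow]
          exact pow_le_pow_left₀ (abs_nonneg _) (hfabs ω) _
      _ = Cζ ^ ℓ := by simp
  have hc_bd : ∀ ℓ, |c ℓ| ≤ (θ * Cζ) ^ ℓ / (Nat.factorial ℓ : ℝ) := by
    intro ℓ
    rw [hc_def]
    calc |θ ^ ℓ / (Nat.factorial ℓ : ℝ) * ∫ ω, f ω ^ ℓ ∂μ|
        = θ ^ ℓ / (Nat.factorial ℓ : ℝ) * |∫ ω, f ω ^ ℓ ∂μ| := by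
          rw [abs_mul, abs_of_nonneg (by positivity)]
      _ ≤ θ ^ ℓ / (Nat.factorial ℓ : ℝ) * Cζ ^ ℓ :=
          mul_le_mul_of_nonneg_left (hfint_bd ℓ) (by positivity)
      _ = (θ * Cζ) ^ ℓ / (Nat.factorial ℓ : ℝ) := by rw [mul_pow]; ring
  have hc_sum : Summable c :=
    Summable.of_abs (Summable.of_nonneg_of_le (fun ℓ => abs_nonneg _) hc_bd
      (Real.summable_pow_div_factorial _))
  have hc0 : c 0 = 1 := by simp [hc_def]
  have hc1 : c 1 = 0 := by simp [hc_def, hmean]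
  -- splitting
  have hsplit : ∑' ℓ, c ℓ = 1 + ∑' ℓ, c (ℓ + 2) := by
    rw [hc_sum.tsum_eq_zero_add, Summable.tsum_eq_zero_add ((summable_nat_add_iff 1).mpr hc_sum)]
    rw [hc0, hc1, zero_add]
  set b : ℕ → ℝ := fun ℓ => θ ^ (ℓ + 2) / (Nat.factorial (ℓ + 2) : ℝ) *
    ∫ ω, g ω * |(μ[fun ω' => z ω' ^ (ℓ + 2)|m]) ω| ∂μ with hb_def
  have hcb : ∀ ℓ, c (ℓ + 2) ≤ b ℓ := fun ℓ =>
    mul_le_mul_of_nonneg_left (hkey ℓ) (by positivity)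
  have hb_nonneg : ∀ ℓ, 0 ≤ b ℓ := fun ℓ => mul_nonneg (by positivity) (hrhs_nonneg ℓ)
  have hb_bd : ∀ ℓ, b ℓ ≤ (θ * Cζ) ^ (ℓ + 2) / (Nat.factorial (ℓ + 2) : ℝ) := by
    intro ℓ
    calc b ℓ ≤ θ ^ (ℓ + 2) / (Nat.factorial (ℓ + 2) : ℝ) * Cζ ^ (ℓ + 2) :=
          mul_le_mul_of_nonneg_left (hrhs_bdd ℓ) (by positivity)
      _ = (θ * Cζ) ^ (ℓ + 2) / (Nat.factorial (ℓ + 2) : ℝ) := by rw [mul_pow]; ring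
  have hb_sum : Summable b :=
    Summable.of_nonneg_of_le hb_nonneg hb_bd
      ((summable_nat_add_iff 2).mpr (Real.summable_pow_div_factorial (θ * Cζ)))
  have h3 : ∑' ℓ, c (ℓ + 2) ≤ ∑' ℓ, b ℓ :=
    Summable.tsum_le_tsum hcb ((summable_nat_add_iff 2).mpr hc_sum) hb_sum
  -- conclude
  calc ∫ ω, Real.exp (θ * f ω) ∂μ = 1 + ∑' ℓ, c (ℓ + 2) := by rw [hexp, hsplit]
    _ ≤ 1 + ∑' ℓ, b ℓ := by linarith
    _ ≤ Real.exp (∑' ℓ, b ℓ) := by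
        have := Real.add_one_le_exp (∑' ℓ, b ℓ)
        linarith

theorem stmt_18 {Ω E : Type*} [MeasurableSpace Ω] [MeasurableSpace E]
    (μ : Measure Ω) [IsProbabilityMeasure μ]
    (T : Ω → ℝ) (Δ : Ω → E) (ζ : ℝ × E → ℝ)
    (hT : Measurable T) (hΔ : Measurable Δ) (hζ : Measurable ζ)
    (Cζ : ℝ) (hζbdd : ∀ p, |ζ p| ≤ Cζ)
    (hcond : μ[fun ω => ζ (T ω, Δ ω) | MeasurableSpace.comap T inferInstance]
      =ᵐ[μ] fun _ => (0:ℝ))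
    (θ : ℝ) (hθ : 0 < θ) (A : Set ℝ) (hA : MeasurableSet A) (n : ℕ) :
    ∫ x : Fin n → Ω,
        Real.exp (θ * ∑ i, Set.indicator A (fun _ => (1:ℝ)) (T (x i)) * ζ (T (x i), Δ (x i)))
        ∂(Measure.pi fun _ : Fin n => μ)
      ≤ Real.exp ((n : ℝ) * ∑' ℓ : ℕ,
          θ ^ (ℓ + 2) / (Nat.factorial (ℓ + 2)) *
            ∫ ω, Set.indicator A (fun _ => (1:ℝ)) (T ω) *
              |(μ[fun ω' => ζ (T ω', Δ ω') ^ (ℓ + 2) |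
                  MeasurableSpace.comap T inferInstance]) ω| ∂μ) := by
  letI : MeasureSpace Ω := ⟨μ⟩
  have hAs : ∀ ω : Ω, Set.indicator A (fun _ => (1:ℝ)) (T ω)
      = (T ⁻¹' A).indicator (fun _ => (1:ℝ)) ω := by
    intro ω
    by_cases h : T ω ∈ A <;> simp [Set.indicator_apply, h]
  simp_rw [hAs]
  have haux := aux_18 (MeasurableSpace.comap T inferInstance) μ hT.comap_le
    (fun ω => ζ (T ω, Δ ω)) (hζ.comp (hT.prodMk hΔ)) Cζ (fun ω => hζbdd _)
    hcond θ hθ (T ⁻¹' A) ⟨A, hA, rfl⟩ (hT hA)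
  have h1 : ∫ x : Fin n → Ω,
        Real.exp (θ * ∑ i, (T ⁻¹' A).indicator (fun _ => (1:ℝ)) (x i) * ζ (T (x i), Δ (x i)))
        ∂(Measure.pi fun _ : Fin n => μ)
      = (∫ ω, Real.exp (θ * ((T ⁻¹' A).indicator (fun _ => (1:ℝ)) ω * ζ (T ω, Δ ω))) ∂μ) ^ n := by
    have h2 : ∀ x : Fin n → Ω,
        Real.exp (θ * ∑ i, (T ⁻¹' A).indicator (fun _ => (1:ℝ)) (x i) * ζ (T (x i), Δ (x i)))
        = ∏ i, Real.exp (θ * ((T ⁻¹' A).indicator (fun _ => (1:ℝ)) (x i) * ζ (T (x i), Δ (x i)))) := by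
      intro x
      rw [Finset.mul_sum, Real.exp_sum]
    simp_rw [h2]
    have h3 := MeasureTheory.integral_fintype_prod_eq_pow (𝕜 := ℝ) (ι := Fin n) (μ := μ)
      (fun ω => Real.exp (θ * ((T ⁻¹' A).indicator (fun _ => (1:ℝ)) ω * ζ (T ω, Δ ω))))
    simpa using h3
  rw [h1]
  calc (∫ ω, Real.exp (θ * ((T ⁻¹' A).indicator (fun _ => (1:ℝ)) ω * ζ (T ω, Δ ω))) ∂μ) ^ n
      ≤ (Real.exp (∑' ℓ : ℕ,
          θ ^ (ℓ + 2) / (Nat.factorial (ℓ + 2)) *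
            ∫ ω, (T ⁻¹' A).indicator (fun _ => (1:ℝ)) ω *
              |(μ[fun ω' => ζ (T ω', Δ ω') ^ (ℓ + 2) |
                  MeasurableSpace.comap T inferInstance]) ω| ∂μ)) ^ n :=
        pow_le_pow_left₀ (integral_nonneg fun ω => (Real.exp_pos _).le) haux n
    _ = _ := by rw [← Real.exp_nat_mul]
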